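/- Let G be a graph with tw(G) = 3 containing a non-disconnecting ladder of length at least 5, and let S be one of the three central squares of the ladder. Then no bag of any width-3 tree decomposition of G contains all four vertices of S. -/

import Mathlib

open SimpleGraph

/-- The ladder of length `k`: the `2 × (k+1)` grid graph. -/
def ladder (k : ℕ) : SimpleGraph (Fin 2 × Fin (k + 1)) :=
  SimpleGraph.fromRel fun p q =>
    (p.1 = q.1 ∧ p.2.val + 1 = q.2.val) ∨ (p.2 = q.2 ∧ p.1 ≠ q.1)

/-- `G` contains a ladder of length `k`: an induced copy of the `2 × (k+1)` grid,
attached to the rest of `G` only via its four cornerpoints (the vertices in columns `0` and `k`). -/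
structure ContainsLadder {V : Type} (G : SimpleGraph V) (k : ℕ) where
  f : Fin 2 × Fin (k + 1) → V
  inj : Function.Injective f
  induced : ∀ p q, G.Adj (f p) (f q) ↔ (ladder k).Adj p q
  attach : ∀ p : Fin 2 × Fin (k + 1), p.2.val ≠ 0 → p.2.val ≠ k →
    ∀ v : V, G.Adj (f p) v → v ∈ Set.range f

/-- The two horizontal edges of square `i` of the ladder form an edge cut of `G`. -/
def ContainsLadder.SquareCut {V : Type} {G : SimpleGraph V} {k : ℕ}
    (L : ContainsLadder G k) (i : Fin k) : Prop :=
  ¬ (G.deleteEdges {s(L.f (0, i.castSucc), L.f (0, i.succ)),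
      s(L.f (1, i.castSucc), L.f (1, i.succ))}).Connected

/-- The ladder is disconnecting: the horizontal edges of some square form an edge cut. -/
def ContainsLadder.Disconnects {V : Type} {G : SimpleGraph V} {k : ℕ}
    (L : ContainsLadder G k) : Prop :=
  ∃ i : Fin k, L.SquareCut i

/-- A tree decomposition of a graph. -/
structure TreeDecomp {V : Type} (G : SimpleGraph V) where
  ι : Type
  [fin : Fintype ι]
  tree : SimpleGraph ι
  isTree : tree.IsTree
  bag : ι → Finset V
  cover_vertex : ∀ v : V, ∃ i, v ∈ bag i
  cover_edge : ∀ ⦃u v : V⦄, G.Adj u v → ∃ i, u ∈ bag i ∧ v ∈ bag i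
  bag_connected : ∀ v : V, (tree.induce {i | v ∈ bag i}).Connected

/-- The width of a tree decomposition: maximum bag size minus one. -/
def TreeDecomp.width {V : Type} {G : SimpleGraph V} (td : TreeDecomp G) : ℕ :=
  letI := td.fin
  (Finset.univ.sup fun i => (td.bag i).card) - 1

/-- The treewidth of a graph: minimum width over all tree decompositions. -/
noncomputable def treewidth {V : Type} (G : SimpleGraph V) : ℕ :=
  sInf (Set.range fun td : TreeDecomp G => td.width)

/-- `H` is a minor of `G`: witnessed by pairwise disjoint nonempty connected branch sets. -/
def IsMinor {W V : Type} (H : SimpleGraph W) (G : SimpleGraph V) : Prop :=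
  ∃ φ : W → Set V, (∀ w, (φ w).Nonempty) ∧ (∀ w, (G.induce (φ w)).Connected) ∧
    (∀ w w', w ≠ w' → Disjoint (φ w) (φ w')) ∧
    (∀ w w', H.Adj w w' → ∃ u ∈ φ w, ∃ v ∈ φ w', G.Adj u v)

/-- Lengthen the ladder `L` by `m` squares, by inserting `m` new rungs between
columns `0` and `1` (subdividing the two horizontal edges and adding rungs). -/
def extendLadder {V : Type} (G : SimpleGraph V) {k : ℕ} (L : ContainsLadder G k) (m : ℕ) :
    SimpleGraph (V ⊕ (Fin 2 × Fin m)) :=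
  SimpleGraph.fromRel fun p q =>
    (∃ u v : V, p = Sum.inl u ∧ q = Sum.inl v ∧ G.Adj u v ∧
      (m ≠ 0 → ∀ a : Fin 2, s(u, v) ≠ s(L.f (a, 0), L.f (a, 1)))) ∨
    (∃ (a : Fin 2) (j : Fin m), j.val = 0 ∧ p = Sum.inl (L.f (a, 0)) ∧ q = Sum.inr (a, j)) ∨
    (∃ (a : Fin 2) (j : Fin m), j.val = m - 1 ∧ p = Sum.inr (a, j) ∧ q = Sum.inl (L.f (a, 1))) ∨
    (∃ (a : Fin 2) (j j' : Fin m), j.val + 1 = j'.val ∧ p = Sum.inr (a, j) ∧ q = Sum.inr (a, j')) ∨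
    (∃ (a b : Fin 2) (j : Fin m), a ≠ b ∧ p = Sum.inr (a, j) ∧ q = Sum.inr (b, j))

/-- Insert one new rung into square `i` of the ladder `L`: two new vertices `inr 0, inr 1`
subdividing the horizontal edges of square `i`, joined by an edge. -/
def insertRung {V : Type} (G : SimpleGraph V) {k : ℕ} (L : ContainsLadder G k) (i : Fin k) :
    SimpleGraph (V ⊕ Fin 2) :=
  SimpleGraph.fromRel fun p q =>
    (∃ u v : V, p = Sum.inl u ∧ q = Sum.inl v ∧ G.Adj u v ∧
      ∀ a : Fin 2, s(u, v) ≠ s(L.f (a, i.castSucc), L.f (a, i.succ))) ∨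
    (∃ a : Fin 2, p = Sum.inl (L.f (a, i.castSucc)) ∧ q = Sum.inr a) ∨
    (∃ a : Fin 2, p = Sum.inr a ∧ q = Sum.inl (L.f (a, i.succ))) ∨
    (p = Sum.inr (0 : Fin 2) ∧ q = Sum.inr (1 : Fin 2))

/-- Contract the edge `{u, v}` of `G`: merge `v` into `u`. -/
def contractEdge {V : Type} (G : SimpleGraph V) (u v : V) : SimpleGraph {x : V // x ≠ v} :=
  SimpleGraph.fromRel fun x y =>
    G.Adj x.val y.val ∨ (x.val = u ∧ G.Adj v y.val) ∨ (y.val = u ∧ G.Adj x.val v)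

/-- Subdivide the edge `{u, v}` of `G` with a new vertex. -/
def subdivide {V : Type} (G : SimpleGraph V) (u v : V) : SimpleGraph (V ⊕ Unit) :=
  SimpleGraph.fromRel fun p q =>
    (∃ x y : V, p = Sum.inl x ∧ q = Sum.inl y ∧ G.Adj x y ∧ s(x, y) ≠ s(u, v)) ∨
    (p = Sum.inl u ∧ q = Sum.inr ()) ∨ (p = Sum.inl v ∧ q = Sum.inr ())

/-- Suppress the degree-2 vertex `v` with neighbours `a` and `b`:
delete `v` and add the edge `{a, b}` (if not already present). -/
def suppress {V : Type} (G : SimpleGraph V) (v a b : V) : SimpleGraph {x : V // x ≠ v} :=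
  SimpleGraph.fromRel fun x y =>
    G.Adj x.val y.val ∨ (x.val = a ∧ y.val = b)

/-- A graph is chordal if every cycle on at least 4 vertices has a chord. -/
def IsChordal {V : Type} (G : SimpleGraph V) : Prop :=
  ∀ n : ℕ, ∀ f : Fin (n + 4) → V, Function.Injective f →
    (∀ i : Fin (n + 4), G.Adj (f i) (f (i + 1))) →
    ∃ i j : Fin (n + 4), i ≠ j ∧ j ≠ i + 1 ∧ i ≠ j + 1 ∧ G.Adj (f i) (f j)

/-- The induced subgraph on `S` has no cutvertex. -/
def NoCutvertex {V : Type} (G : SimpleGraph V) (S : Set V) : Prop :=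
  ∀ v ∈ S, ∀ x y : ↥(S \ {v}), (G.induce (S \ {v})).Reachable x y

/-- `S` is a block (biconnected component) of `G`: a maximal connected
vertex set without a cutvertex. -/
def IsBlock {V : Type} (G : SimpleGraph V) (S : Set V) : Prop :=
  S.Nonempty ∧ (G.induce S).Connected ∧ NoCutvertex G S ∧
  ∀ T : Set V, S ⊆ T → (G.induce T).Connected → NoCutvertex G T → T = S

-- auxiliary lemmas

lemma ladder_adj' {k : ℕ} {p q : Fin 2 × Fin (k+1)} :
    (ladder k).Adj p q ↔
      ((p.1 = q.1 ∧ (p.2.val + 1 = q.2.val ∨ q.2.val + 1 = p.2.val)) ∨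
       (p.2 = q.2 ∧ p.1 ≠ q.1)) := by
  unfold ladder
  rw [SimpleGraph.fromRel_adj]
  constructor
  · rintro ⟨hne, (⟨h1, h2⟩ | ⟨h1, h2⟩) | (⟨h1, h2⟩ | ⟨h1, h2⟩)⟩
    · exact Or.inl ⟨h1, Or.inl h2⟩
    · exact Or.inr ⟨h1, h2⟩
    · exact Or.inl ⟨h1.symm, Or.inr h2⟩
    · exact Or.inr ⟨h1.symm, h2.symm⟩
  · rintro (⟨h1, h2 | h2⟩ | ⟨h1, h2⟩)
    · exact ⟨fun h => by rw [h] at h2; omega, Or.inl (Or.inl ⟨h1, h2⟩)⟩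
    · exact ⟨fun h => by rw [h] at h2; omega, Or.inr (Or.inl ⟨h1.symm, h2⟩)⟩
    · exact ⟨fun h => h2 (by rw [h]), Or.inl (Or.inr ⟨h1, h2⟩)⟩

lemma walk_of_induce {α : Type} {T : SimpleGraph α} {s : Set α} :
    ∀ {a b : ↥s}, (T.induce s).Walk a b →
      ∃ w : T.Walk a.val b.val, ∀ c ∈ w.support, c ∈ s := by
  intro a b w
  induction w with
  | nil => exact ⟨Walk.nil, by simp⟩
  | @cons x y _ h p ih =>
    obtain ⟨w', hw'⟩ := ih
    refine ⟨Walk.cons (show T.Adj x.val y.val from h) w', ?_⟩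
    intro c hc
    rw [Walk.support_cons, List.mem_cons] at hc
    rcases hc with rfl | hc
    · exact x.prop
    · exact hw' c hc

lemma tree_nbr_unique {α : Type} {T : SimpleGraph α} (hT : T.IsTree) {B n n' : α}
    (h1 : T.Adj B n) (h2 : T.Adj B n') (w : T.Walk n n') (hw : B ∉ w.support) : n = n' := by
  classical
  have hb := w.bypass_isPath
  have hbs : B ∉ w.bypass.support := fun h => hw (w.support_bypass_subset h)
  have hp1 : (Walk.cons h1 w.bypass).IsPath := (Walk.cons_isPath_iff h1 w.bypass).2 ⟨hb, hbs⟩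
  have hp2 : (Walk.cons h2 Walk.nil).IsPath := by
    rw [Walk.cons_isPath_iff]
    simp [h2.ne]
  have heq := (hT.existsUnique_path B n').unique hp1 hp2
  have hsup := congrArg Walk.support heq
  rw [Walk.support_cons, Walk.support_cons, Walk.support_nil] at hsup
  have := List.tail_eq_of_cons_eq hsup
  rw [w.bypass.support_eq_cons] at this
  exact (List.head_eq_of_cons_eq this)

lemma path_subset_of_connected {α : Type} {T : SimpleGraph α} (hT : T.IsTree) {s : Set α}
    (hc : (T.induce s).Connected) {a b : α} (ha : a ∈ s) (hb : b ∈ s)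
    {p : T.Walk a b} (hp : p.IsPath) : ∀ c ∈ p.support, c ∈ s := by
  classical
  obtain ⟨ww⟩ := hc.preconnected ⟨a, ha⟩ ⟨b, hb⟩
  obtain ⟨w, hw⟩ := walk_of_induce ww
  have : p = w.bypass := (hT.existsUnique_path a b).unique hp w.bypass_isPath
  intro c hc'
  rw [this] at hc'
  exact hw c (w.support_bypass_subset hc')

theorem stmt9 {V : Type} [Fintype V] (G : SimpleGraph V) (hG : G.Connected)
    (htw : treewidth G = 3) {k : ℕ} (hk : 5 ≤ k) (L : ContainsLadder G k)
    (hnd : ¬ L.Disconnects) (i : Fin k) (hi1 : 1 ≤ i.val) (hi2 : i.val ≤ k - 2)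
    (td : TreeDecomp G) (hw : td.width = 3) :
    ∀ B : td.ι, ¬ (∀ a : Fin 2,
      L.f (a, i.castSucc) ∈ td.bag B ∧ L.f (a, i.succ) ∈ td.bag B) := by
  classical
  letI := td.fin
  intro B hB
  have hik : i.val + 2 ≤ k := by omega
  have hival : i.val < k := i.isLt
  set ci : Fin (k+1) := i.castSucc with hci
  set ci1 : Fin (k+1) := i.succ with hci1
  set cm : Fin (k+1) := ⟨i.val - 1, by omega⟩ with hcm
  set cp : Fin (k+1) := ⟨i.val + 2, by omega⟩ with hcp
  have hciv : ci.val = i.val := rfl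
  have hci1v : ci1.val = i.val + 1 := rfl
  have hcmv : cm.val = i.val - 1 := rfl
  have hcpv : cp.val = i.val + 2 := rfl
  -- injectivity helpers
  have hne : ∀ (a b : Fin 2) (c d : Fin (k+1)), (a ≠ b ∨ c.val ≠ d.val) →
      L.f (a,c) ≠ L.f (b,d) := by
    intro a b c d h heq
    have h2 := L.inj heq
    rw [Prod.mk.injEq] at h2
    rcases h with h | h
    · exact h h2.1
    · exact h (congrArg Fin.val h2.2)
  -- the square S
  set S : Set V := {L.f (0,ci), L.f (1,ci), L.f (0,ci1), L.f (1,ci1)} with hS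
  have hmemS : ∀ v, v ∈ S ↔
      v = L.f (0,ci) ∨ v = L.f (1,ci) ∨ v = L.f (0,ci1) ∨ v = L.f (1,ci1) := by
    intro v; simp [hS]
  have hanchor : ∀ a : Fin 2, L.f (a, cm) ∉ S ∧ L.f (a, cp) ∉ S := by
    intro a
    constructor <;> rw [hmemS] <;> push_neg <;>
      exact ⟨hne _ _ _ _ (Or.inr (by omega)), hne _ _ _ _ (Or.inr (by omega)),
             hne _ _ _ _ (Or.inr (by omega)), hne _ _ _ _ (Or.inr (by omega))⟩
  -- the graph with the two horizontal edges of square i deleted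
  set G' := G.deleteEdges {s(L.f (0,ci), L.f (0,ci1)), s(L.f (1,ci), L.f (1,ci1))} with hG'def
  have hG'conn : G'.Connected := by
    have h1 := not_exists.mp hnd i
    unfold ContainsLadder.SquareCut at h1
    exact not_not.mp h1
  -- adjacency decoder for square vertices
  have hadjS : ∀ (a : Fin 2) (c : Fin (k+1)), (c = ci ∨ c = ci1) → ∀ v, G.Adj (L.f (a,c)) v →
      ∃ (b : Fin 2) (d : Fin (k+1)), v = L.f (b,d) ∧
        ((a = b ∧ (c.val + 1 = d.val ∨ d.val + 1 = c.val)) ∨ (c = d ∧ a ≠ b)) := by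
    intro a c hc v hv
    have hc0 : c.val ≠ 0 := by rcases hc with rfl | rfl <;> omega
    have hck : c.val ≠ k := by rcases hc with rfl | rfl <;> omega
    obtain ⟨⟨b, d⟩, rfl⟩ := L.attach (a, c) hc0 hck v hv
    have h2 := (L.induced (a,c) (b,d)).mp hv
    rw [ladder_adj'] at h2
    exact ⟨b, d, rfl, h2⟩
  -- the projection
  set pi : V → V := fun v =>
    if v = L.f (0,ci) then L.f (0,cm) else if v = L.f (1,ci) then L.f (1,cm)
    else if v = L.f (0,ci1) then L.f (0,cp) else if v = L.f (1,ci1) then L.f (1,cp) else v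
    with hpi
  have hpi00 : pi (L.f (0,ci)) = L.f (0,cm) := if_pos rfl
  have hpi10 : pi (L.f (1,ci)) = L.f (1,cm) :=
    (if_neg (hne 1 0 ci ci (Or.inl (by decide)))).trans (if_pos rfl)
  have hpi01 : pi (L.f (0,ci1)) = L.f (0,cp) :=
    (if_neg (hne 0 0 ci1 ci (Or.inr (by omega)))).trans
      ((if_neg (hne 0 1 ci1 ci (Or.inl (by decide)))).trans (if_pos rfl))
  have hpi11 : pi (L.f (1,ci1)) = L.f (1,cp) :=
    (if_neg (hne 1 0 ci1 ci (Or.inl (by decide)))).trans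
      ((if_neg (hne 1 1 ci1 ci (Or.inr (by omega)))).trans
        ((if_neg (hne 1 0 ci1 ci1 (Or.inl (by decide)))).trans (if_pos rfl)))
  have hpifix : ∀ v, v ∉ S → pi v = v := by
    intro v hv
    rw [hmemS] at hv
    push_neg at hv
    exact (if_neg hv.1).trans ((if_neg hv.2.1).trans
      ((if_neg hv.2.2.1).trans (if_neg hv.2.2.2)))
  have hpiS : ∀ v, pi v ∉ S := by
    intro v
    by_cases h1 : v = L.f (0,ci)
    · rw [h1, hpi00]; exact (hanchor 0).1
    by_cases h2 : v = L.f (1,ci)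
    · rw [h2, hpi10]; exact (hanchor 1).1
    by_cases h3 : v = L.f (0,ci1)
    · rw [h3, hpi01]; exact (hanchor 0).2
    by_cases h4 : v = L.f (1,ci1)
    · rw [h4, hpi11]; exact (hanchor 1).2
    have hv : v ∉ S := by rw [hmemS]; push_neg; exact ⟨h1, h2, h3, h4⟩
    rw [hpifix v hv]; exact hv
  -- rung adjacencies at the anchor columns
  have hrung : ∀ c : Fin (k+1), G.Adj (L.f (0,c)) (L.f (1,c)) := by
    intro c
    rw [L.induced, ladder_adj']
    exact Or.inr ⟨rfl, show (0:Fin 2) ≠ 1 by decide⟩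
  have hadj_cm : ∀ a : Fin 2, G.Adj (L.f (a,ci)) (L.f (a,cm)) := by
    intro a
    rw [L.induced, ladder_adj']
    exact Or.inl ⟨rfl, Or.inr (show cm.val + 1 = ci.val by omega)⟩
  have hadj_cp : ∀ a : Fin 2, G.Adj (L.f (a,ci1)) (L.f (a,cp)) := by
    intro a
    rw [L.induced, ladder_adj']
    exact Or.inl ⟨rfl, Or.inl (show ci1.val + 1 = cp.val by omega)⟩
  -- key homomorphism property
  have hkey : ∀ u v, G'.Adj u v → u ∈ S → (pi u = pi v ∨ G.Adj (pi u) (pi v)) := by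
    intro u v huv huS
    rw [hG'def, SimpleGraph.deleteEdges_adj] at huv
    obtain ⟨hadj, hdel⟩ := huv
    simp only [Set.mem_insert_iff, Set.mem_singleton_iff, not_or] at hdel
    rcases (hmemS u).mp huS with rfl | rfl | rfl | rfl
    · obtain ⟨b, d, rfl, hd⟩ := hadjS 0 ci (Or.inl rfl) v hadj
      rcases hd with ⟨rfl, h | h⟩ | ⟨rfl, hb⟩
      · exfalso
        apply hdel.1
        have : d = ci1 := by omega
        rw [this]
      · have : d = cm := by omega
        subst this
        left
        rw [hpi00, hpifix _ (hanchor 0).1]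
      · have hb1 : b = 1 := by omega
        subst hb1
        right
        rw [hpi00, hpi10]
        exact hrung cm
    · obtain ⟨b, d, rfl, hd⟩ := hadjS 1 ci (Or.inl rfl) v hadj
      rcases hd with ⟨rfl, h | h⟩ | ⟨rfl, hb⟩
      · exfalso
        apply hdel.2
        have : d = ci1 := by omega
        rw [this]
      · have : d = cm := by omega
        subst this
        left
        rw [hpi10, hpifix _ (hanchor 1).1]
      · have hb1 : b = 0 := by omega
        subst hb1
        right
        rw [hpi10, hpi00]
        exact (hrung cm).symm
    · obtain ⟨b, d, rfl, hd⟩ := hadjS 0 ci1 (Or.inr rfl) v hadj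
      rcases hd with ⟨rfl, h | h⟩ | ⟨rfl, hb⟩
      · have : d = cp := by omega
        subst this
        left
        rw [hpi01, hpifix _ (hanchor 0).2]
      · exfalso
        apply hdel.1
        have : d = ci := by omega
        rw [this, Sym2.eq_swap]
      · have hb1 : b = 1 := by omega
        subst hb1
        right
        rw [hpi01, hpi11]
        exact hrung cp
    · obtain ⟨b, d, rfl, hd⟩ := hadjS 1 ci1 (Or.inr rfl) v hadj
      rcases hd with ⟨rfl, h | h⟩ | ⟨rfl, hb⟩
      · have : d = cp := by omega
        subst this
        left
        rw [hpi11, hpifix _ (hanchor 1).2]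
      · exfalso
        apply hdel.2
        have : d = ci := by omega
        rw [this, Sym2.eq_swap]
      · have hb1 : b = 0 := by omega
        subst hb1
        right
        rw [hpi11, hpi01]
        exact (hrung cp).symm
  have hhom : ∀ u v, G'.Adj u v → (pi u = pi v ∨ G.Adj (pi u) (pi v)) := by
    intro u v huv
    by_cases hu : u ∈ S
    · exact hkey u v huv hu
    by_cases hv : v ∈ S
    · rcases hkey v u huv.symm hv with h | h
      · exact Or.inl h.symm
      · exact Or.inr h.symm
    · right
      rw [hpifix u hu, hpifix v hv]
      rw [hG'def, SimpleGraph.deleteEdges_adj] at huv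
      exact huv.1
  -- walks avoiding S
  have hmap : ∀ {u v : V} (_ : G'.Walk u v),
      ∃ w' : G.Walk (pi u) (pi v), ∀ c ∈ w'.support, c ∉ S := by
    intro u v w
    induction w with
    | nil => exact ⟨Walk.nil, by simpa using hpiS _⟩
    | @cons x y _ h p ih =>
      obtain ⟨w', hw'⟩ := ih
      rcases hhom x y h with heq | hadj
      · exact ⟨w'.copy heq.symm rfl, by
          intro c hc; rw [Walk.support_copy] at hc; exact hw' c hc⟩
      · refine ⟨Walk.cons hadj w', ?_⟩
        intro c hc
        rw [Walk.support_cons, List.mem_cons] at hc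
        rcases hc with rfl | hc
        · exact hpiS x
        · exact hw' c hc
  have hA : ∀ u v, u ∉ S → v ∉ S → ∃ w : G.Walk u v, ∀ c ∈ w.support, c ∉ S := by
    intro u v hu hv
    obtain ⟨w⟩ := hG'conn.preconnected u v
    obtain ⟨w', hw'⟩ := hmap w
    exact ⟨w'.copy (hpifix u hu) (hpifix v hv), by
      intro c hc; rw [Walk.support_copy] at hc; exact hw' c hc⟩
  -- bag sizes
  have hcard : ∀ j : td.ι, (td.bag j).card ≤ 4 := by
    intro j
    have h5 : (td.bag j).card ≤ (Finset.univ.sup fun j : td.ι => (td.bag j).card) :=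
      Finset.le_sup (f := fun j : td.ι => (td.bag j).card) (Finset.mem_univ j)
    have h4 : (Finset.univ.sup fun j : td.ι => (td.bag j).card) - 1 = 3 := hw
    omega
  -- S as a finset
  set Sfin : Finset V := {L.f (0,ci), L.f (1,ci), L.f (0,ci1), L.f (1,ci1)} with hSfin
  have hmemSfin : ∀ v, v ∈ Sfin ↔ v ∈ S := by
    intro v
    rw [hmemS, hSfin]
    simp
  have hScard : Sfin.card = 4 := by
    have h12 : L.f (0,ci) ∉ ({L.f (1,ci), L.f (0,ci1), L.f (1,ci1)} : Finset V) := by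
      simp only [Finset.mem_insert, Finset.mem_singleton]
      push_neg
      exact ⟨hne _ _ _ _ (Or.inl (by decide)), hne _ _ _ _ (Or.inr (by omega)),
        hne _ _ _ _ (Or.inl (by decide))⟩
    have h23 : L.f (1,ci) ∉ ({L.f (0,ci1), L.f (1,ci1)} : Finset V) := by
      simp only [Finset.mem_insert, Finset.mem_singleton]
      push_neg
      exact ⟨hne _ _ _ _ (Or.inl (by decide)), hne _ _ _ _ (Or.inr (by omega))⟩
    have h34 : L.f (0,ci1) ∉ ({L.f (1,ci1)} : Finset V) := by
      simp only [Finset.mem_singleton]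
      exact hne _ _ _ _ (Or.inl (by decide))
    rw [hSfin, Finset.card_insert_of_notMem h12, Finset.card_insert_of_notMem h23,
      Finset.card_insert_of_notMem h34, Finset.card_singleton]
  have hbagS : ∀ j, Sfin ⊆ td.bag j → td.bag j = Sfin :=
    fun j hj => (Finset.eq_of_subset_of_card_le hj (by rw [hScard]; exact hcard j)).symm
  set P : Finset td.ι := Finset.univ.filter (fun j => Sfin ⊆ td.bag j) with hP
  have hBP : B ∈ P := by
    rw [hP, Finset.mem_filter]
    refine ⟨Finset.mem_univ _, ?_⟩
    intro v hv
    rw [hSfin] at hv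
    simp only [Finset.mem_insert, Finset.mem_singleton] at hv
    rcases hv with rfl | rfl | rfl | rfl
    · exact (hB 0).1
    · exact (hB 1).1
    · exact (hB 0).2
    · exact (hB 1).2
  -- the bag C0 containing the edge from f(0,ci) to its anchor
  obtain ⟨C0, hC0l, hC0r⟩ := td.cover_edge (hadj_cm 0)
  obtain ⟨B0, hB0P, hminB0⟩ := P.exists_min_image (fun j => td.tree.dist j C0) ⟨B, hBP⟩
  have hB0S : td.bag B0 = Sfin := by
    apply hbagS
    rw [hP, Finset.mem_filter] at hB0P
    exact hB0P.2
  have hnotbag : ∀ v, v ∉ S → v ∉ td.bag B0 := by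
    intro v hv hvb
    rw [hB0S] at hvb
    exact hv ((hmemSfin v).mp hvb)
  have hB0C0 : B0 ≠ C0 := by
    intro h
    exact hnotbag _ (hanchor 0).1 (h ▸ hC0r)
  -- separator lemmas
  have hK1 : ∀ v, v ∉ S → ∀ x y, v ∈ td.bag x → v ∈ td.bag y →
      ∃ w : td.tree.Walk x y, B0 ∉ w.support := by
    intro v hv x y hx hy
    obtain ⟨ww⟩ := (td.bag_connected v).preconnected ⟨x, hx⟩ ⟨y, hy⟩
    obtain ⟨w, hwsup⟩ := walk_of_induce ww
    exact ⟨w, fun hm => (hnotbag v hv) (hwsup _ hm)⟩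
  have hK3 : ∀ {u v : V} (wuv : G.Walk u v), (∀ c ∈ wuv.support, c ∉ S) →
      ∀ x y, u ∈ td.bag x → v ∈ td.bag y →
      ∃ w : td.tree.Walk x y, B0 ∉ w.support := by
    intro u v wuv
    induction wuv with
    | nil =>
      intro hs x y hx hy
      exact hK1 _ (hs _ (Walk.start_mem_support _)) x y hx hy
    | @cons a b _ hadj p ih =>
      intro hs x y hx hy
      obtain ⟨z, hz1, hz2⟩ := td.cover_edge hadj
      obtain ⟨w1, hw1⟩ := hK1 a (hs _ (Walk.start_mem_support _)) x z hx hz1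
      have hs' : ∀ c ∈ p.support, c ∉ S := fun c hc => hs c (by
        rw [Walk.support_cons]; exact List.mem_cons_of_mem _ hc)
      obtain ⟨w2, hw2⟩ := ih hs' z y hz2 hy
      refine ⟨w1.append w2, fun hm => ?_⟩
      rcases (Walk.mem_support_append_iff _ _).mp hm with h | h
      · exact hw1 h
      · exact hw2 h
  -- the path from B0 to C0
  have htree := td.isTree
  obtain ⟨w0, hw0len⟩ := (htree.isConnected.preconnected B0 C0).exists_walk_length_eq_dist
  have hbp : w0.bypass.IsPath := w0.bypass_isPath
  have hbplen : w0.bypass.length = td.tree.dist B0 C0 :=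
    le_antisymm (hw0len ▸ w0.length_bypass_le) (SimpleGraph.dist_le _)
  obtain ⟨n, hBn, q, hq⟩ := Walk.exists_eq_cons_of_ne hB0C0 w0.bypass
  rw [hq] at hbp hbplen
  rw [Walk.cons_isPath_iff] at hbp
  obtain ⟨hqpath, hB0q⟩ := hbp
  rw [Walk.length_cons] at hbplen
  -- every vertex of the square is in bag n
  have hmain : ∀ s t : V, G.Adj s t → s ∈ Sfin → t ∉ S → s ∈ td.bag n := by
    intro s t hst hsS htS
    obtain ⟨M, hMs, hMt⟩ := td.cover_edge hst
    have hMne : B0 ≠ M := fun h => hnotbag t htS (h ▸ hMt)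
    obtain ⟨wA, hwA⟩ := hA (L.f (0,cm)) t (hanchor 0).1 htS
    obtain ⟨w1, hw1⟩ := hK3 wA hwA C0 M hC0r hMt
    obtain ⟨pM, hpMpath⟩ := (htree.existsUnique_path B0 M).exists
    obtain ⟨n', hBn', qM, hqM⟩ := Walk.exists_eq_cons_of_ne hMne pM
    have hpM2 := hpMpath
    rw [hqM, Walk.cons_isPath_iff] at hpM2
    have hcomb : B0 ∉ ((q.append w1).append qM.reverse).support := by
      intro hm
      rcases (Walk.mem_support_append_iff _ _).mp hm with h | h
      · rcases (Walk.mem_support_append_iff _ _).mp h with h' | h'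
        · exact hB0q h'
        · exact hw1 h'
      · rw [Walk.support_reverse, List.mem_reverse] at h
        exact hpM2.2 h
    have hnn' : n = n' := tree_nbr_unique htree hBn hBn' _ hcomb
    have hB0mem : B0 ∈ {j | s ∈ td.bag j} := by
      simp only [Set.mem_setOf_eq]
      rw [hB0S]
      exact hsS
    have hall := path_subset_of_connected htree (td.bag_connected s) hB0mem hMs hpMpath
    have hn'0 : n' ∈ pM.support := by
      rw [hqM, Walk.support_cons]
      exact List.mem_cons_of_mem _ qM.start_mem_support
    have := hall n' hn'0
    rw [hnn']
    exact this
  have hSn : Sfin ⊆ td.bag n := by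
    intro v hv
    have hv' := hv
    rw [hSfin] at hv'
    simp only [Finset.mem_insert, Finset.mem_singleton] at hv'
    rcases hv' with rfl | rfl | rfl | rfl
    · exact hmain _ _ (hadj_cm 0) hv (hanchor 0).1
    · exact hmain _ _ (hadj_cm 1) hv (hanchor 1).1
    · exact hmain _ _ (hadj_cp 0) hv (hanchor 0).2
    · exact hmain _ _ (hadj_cp 1) hv (hanchor 1).2
  have hnP : n ∈ P := by
    rw [hP, Finset.mem_filter]
    exact ⟨Finset.mem_univ _, hSn⟩
  have hlt : td.tree.dist n C0 < td.tree.dist B0 C0 := by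
    have h1 : td.tree.dist n C0 ≤ q.length := SimpleGraph.dist_le q
    omega
  exact absurd (hminB0 n hnP) (not_le.mpr hlt)
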